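/- The number of well-weighted binary trees with n leaves equals the little Schröder number s(n) satisfying s(1)=s(2)=1 and 3(2n−1)s(n) = (n+1)s(n+1) + (n−2)s(n−1) for n ≥ 2. -/

import Mathlib

/-- A weighted binary plane tree: a leaf or a root with weight `r` and two subtrees. -/
inductive WTree : Type
  | leaf : WTree
  | node : ℕ → WTree → WTree → WTree

/-- Number of leaves. -/
def WTree.leaves : WTree → ℕ
  | .leaf => 1
  | .node _ t₁ t₂ => t₁.leaves + t₂.leaves

/-- Well-weighted: each weight is 1 or 2, and weight 2 forbids a right son which is a leaf. -/
def WTree.wellWeighted : WTree → Prop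
  | .leaf => True
  | .node r t₁ t₂ => (r = 1 ∨ r = 2) ∧ (t₂ = .leaf → r = 1) ∧ t₁.wellWeighted ∧ t₂.wellWeighted

/-- The number of well-weighted binary trees with `n` leaves. -/
noncomputable def wwS (n : ℕ) : ℕ :=
  Nat.card {t : WTree // t.wellWeighted ∧ t.leaves = n}

-- little Schröder numbers
def schS : ℕ → ℕ
  | 0 => 0
  | 1 => 1
  | (n+2) => schS (n+1) + 2 * ∑ k : Fin n, schS ((k:ℕ)+1) * schS (n+1-(k:ℕ))
  decreasing_by
  · omega
  · have := k.isLt; omega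
  · have := k.isLt; omega

lemma schS_zero : schS 0 = 0 := by rw [schS]
lemma schS_one : schS 1 = 1 := by rw [schS]
lemma schS_rec (n : ℕ) :
    schS (n+2) = schS (n+1) + 2 * ∑ k ∈ Finset.range n, schS (k+1) * schS (n+1-k) := by
  rw [schS, Fin.sum_univ_eq_sum_range (fun k => schS (k+1) * schS (n+1-k))]

lemma WTree.leaves_pos (t : WTree) : 1 ≤ t.leaves := by
  induction t with
  | leaf => simp [leaves]
  | node r t1 t2 ih1 ih2 => simp [leaves]; omega

abbrev TT (n : ℕ) := {t : WTree // t.wellWeighted ∧ t.leaves = n}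

def gmap (n : ℕ) :
    (TT (n+1) ⊕ (Σ k : Fin n, Bool × TT ((k:ℕ)+1) × TT (n+1-(k:ℕ)))) → TT (n+2)
  | Sum.inl ⟨t1, h⟩ => ⟨.node 1 t1 .leaf, by
      refine ⟨⟨Or.inl rfl, fun _ => rfl, h.1, trivial⟩, ?_⟩
      show t1.leaves + WTree.leaf.leaves = n + 2
      rw [h.2]; rfl⟩
  | Sum.inr ⟨k, b, ⟨t1, h1⟩, ⟨t2, h2⟩⟩ => ⟨.node (if b then 2 else 1) t1 t2, by
      constructor
      · refine ⟨by cases b <;> simp, fun ht => ?_, h1.1, h2.1⟩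
        · exfalso
          have : t2.leaves = 1 := by rw [ht]; rfl
          have hl : (k:ℕ) < n := k.isLt
          rw [h2.2] at this; omega
      · show t1.leaves + t2.leaves = n + 2
        have hl : (k:ℕ) < n := k.isLt
        rw [h1.2, h2.2]; omega⟩

lemma gmap_bij (n : ℕ) : Function.Bijective (gmap n) := by
  constructor
  · rintro (⟨t1, h⟩ | ⟨k, b, ⟨t1, h1⟩, ⟨t2, h2⟩⟩) (⟨s1, g⟩ | ⟨l, c, ⟨s1, g1⟩, ⟨s2, g2⟩⟩) heq <;>
      simp only [gmap, Subtype.mk.injEq, WTree.node.injEq] at heq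
    · simp [heq.2.1]
    · exfalso
      have : (WTree.leaf).leaves = n + 1 - (l : ℕ) := by rw [heq.2.2]; exact g2.2
      have hl : (l:ℕ) < n := l.isLt
      simp [WTree.leaves] at this; omega
    · exfalso
      have : (WTree.leaf).leaves = n + 1 - (k : ℕ) := by rw [← heq.2.2]; exact h2.2
      have hl : (k:ℕ) < n := k.isLt
      simp [WTree.leaves] at this; omega
    · obtain ⟨hb, ht1, ht2⟩ := heq
      have hbc : b = c := by cases b <;> cases c <;> simp_all
      have hkl : k = l := by
        apply Fin.ext
        have : (k:ℕ) + 1 = (l:ℕ) + 1 := by rw [← h1.2, ht1, g1.2]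
        omega
      subst hkl; subst hbc
      simp [ht1, ht2]
  · rintro ⟨t, hw, hl⟩
    match t, hw, hl with
    | .leaf, hw, hl => exact absurd hl (by simp [WTree.leaves])
    | .node r t1 t2, hw, hl =>
      obtain ⟨hr, hrl, hw1, hw2⟩ := hw
      have hl' : t1.leaves + t2.leaves = n + 2 := hl
      match t2, hw2, hrl, hl' with
      | .leaf, _, hrl, hl' =>
        refine ⟨Sum.inl ⟨t1, hw1, ?_⟩, ?_⟩
        · have : (WTree.leaf).leaves = 1 := rfl
          omega
        · simp only [gmap, Subtype.mk.injEq]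
          rw [hrl rfl]
      | .node r' s1 s2, hw2, _, hl' =>
        have h2pos : 2 ≤ (WTree.node r' s1 s2).leaves := by
          have := s1.leaves_pos; have := s2.leaves_pos
          show 2 ≤ s1.leaves + s2.leaves; omega
        have hl'' : t1.leaves + (s1.leaves + s2.leaves) = n + 2 := hl'
        have h1pos := t1.leaves_pos
        refine ⟨Sum.inr ⟨⟨t1.leaves - 1, by omega⟩, decide (r = 2), ⟨t1, hw1, by simp; omega⟩,
          ⟨.node r' s1 s2, hw2, ?_⟩⟩, ?_⟩
        · show s1.leaves + s2.leaves = n + 1 - (t1.leaves - 1)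
          omega
        · rcases hr with h | h <;> simp [gmap, h]

lemma subsingletonTT1 : ∀ x : TT 1, x.1 = WTree.leaf := by
  rintro ⟨t, hw, hl⟩
  match t with
  | .leaf => rfl
  | .node r t1 t2 =>
    exfalso
    have := t1.leaves_pos; have := t2.leaves_pos
    have : t1.leaves + t2.leaves = 1 := hl
    omega

lemma finTT : ∀ n : ℕ, Finite (TT n) := by
  intro n
  induction n using Nat.strong_induction_on with
  | _ n ih =>
    match n with
    | 0 =>
      haveI : Subsingleton (TT 0) := ⟨by
        rintro ⟨t, _, h⟩; exact absurd h (by have := t.leaves_pos; omega)⟩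
      exact Finite.of_subsingleton
    | 1 =>
      haveI : Subsingleton (TT 1) :=
        ⟨fun a b => Subtype.ext (by rw [subsingletonTT1 a, subsingletonTT1 b])⟩
      exact Finite.of_subsingleton
    | (n+2) =>
      have i1 : Finite (TT (n+1)) := ih _ (by omega)
      have i2 : ∀ k : Fin n, Finite (Bool × TT ((k:ℕ)+1) × TT (n+1-(k:ℕ))) := by
        intro k
        have := ih ((k:ℕ)+1) (by have := k.isLt; omega)
        have := ih (n+1-(k:ℕ)) (by omega)
        infer_instance
      exact Finite.of_equiv _ (Equiv.ofBijective _ (gmap_bij n))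

lemma wwS_one : wwS 1 = 1 := by
  have : Nonempty (TT 1) := ⟨⟨.leaf, trivial, rfl⟩⟩
  rw [wwS, Nat.card_eq_one_iff_unique]
  exact ⟨⟨fun a b => Subtype.ext (by rw [subsingletonTT1 a, subsingletonTT1 b])⟩, this⟩

lemma wwS_rec (n : ℕ) :
    wwS (n+2) = wwS (n+1) + 2 * ∑ k ∈ Finset.range n, wwS (k+1) * wwS (n+1-k) := by
  haveI := finTT (n+1)
  haveI i2 : ∀ k : Fin n, Finite (Bool × TT ((k:ℕ)+1) × TT (n+1-(k:ℕ))) := by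
    intro k
    haveI := finTT ((k:ℕ)+1); haveI := finTT (n+1-(k:ℕ)); infer_instance
  haveI i3 : ∀ k : Fin n, Fintype (Bool × TT ((k:ℕ)+1) × TT (n+1-(k:ℕ))) :=
    fun k => Fintype.ofFinite _
  have h := Nat.card_congr (Equiv.ofBijective _ (gmap_bij n)).symm
  show Nat.card (TT (n+2)) = _
  rw [h, Nat.card_sum]
  congr 1
  rw [Nat.card_eq_fintype_card, Fintype.card_sigma,
    Finset.mul_sum, ← Fin.sum_univ_eq_sum_range (fun k => 2 * (wwS (k+1) * wwS (n+1-k)))]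
  refine Finset.sum_congr rfl fun k _ => ?_
  haveI := finTT ((k:ℕ)+1); haveI := finTT (n+1-(k:ℕ))
  rw [← Nat.card_eq_fintype_card, Nat.card_prod, Nat.card_prod]
  congr 1
  simp [Nat.card_eq_fintype_card]

lemma wwS_eq_schS : ∀ n : ℕ, wwS n = schS n := by
  intro n
  induction n using Nat.strong_induction_on with
  | _ n ih =>
    match n with
    | 0 =>
      haveI : IsEmpty (TT 0) :=
        ⟨by rintro ⟨t, _, h⟩; exact absurd h (by have := t.leaves_pos; omega)⟩
      rw [schS_zero]
      simp [wwS]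
    | 1 => rw [wwS_one, schS_one]
    | (n+2) =>
      rw [wwS_rec, schS_rec, ih (n+1) (by omega)]
      congr 1
      rw [Finset.mul_sum, Finset.mul_sum]
      refine Finset.sum_congr rfl fun k hk => ?_
      simp only [Finset.mem_range] at hk
      rw [ih (k+1) (by omega), ih (n+1-k) (by omega)]

open PowerSeries

noncomputable def FS : PowerSeries ℚ := PowerSeries.mk fun n => (schS n : ℚ)

lemma coeff_FS (n : ℕ) : coeff n FS = (schS n : ℚ) := coeff_mk _ _

lemma conv_FS (n : ℕ) :
    coeff n (FS * FS) = ∑ k ∈ Finset.range (n+1), (schS k : ℚ) * schS (n-k) := by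
  rw [coeff_mul, Finset.Nat.sum_antidiagonal_eq_sum_range_succ_mk]
  simp [coeff_FS]

lemma sum_shift (m : ℕ) :
    ∑ k ∈ Finset.range (m+3), (schS k : ℚ) * schS (m+2-k) =
      (∑ k ∈ Finset.range m, (schS (k+1) : ℚ) * schS (m+1-k)) + schS (m+1) := by
  rw [Finset.sum_range_succ' (fun k => (schS k : ℚ) * schS (m+2-k)) (m+2)]
  simp only [schS_zero, Nat.cast_zero, zero_mul, mul_zero, add_zero]
  have h1 : ∀ k ∈ Finset.range (m+2), (schS (k+1) : ℚ) * schS (m+2-(k+1)) =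
      (schS (k+1) : ℚ) * schS (m+1-k) := by
    intro k hk
    have h : m+2-(k+1) = m+1-k := by omega
    rw [h]
  rw [Finset.sum_congr rfl h1, Finset.sum_range_succ, Finset.sum_range_succ]
  have : m + 1 - (m+1) = 0 := by omega
  rw [this, schS_zero]
  have : m + 1 - m = 1 := by omega
  rw [this, schS_one]
  push_cast
  ring

lemma FS_eq : 2*(FS*FS) = (1 + X)*FS - X := by
  ext n
  have h2 : (2 : ℚ⟦X⟧) * (FS*FS) = FS*FS + FS*FS := by ring
  rw [h2, map_add, map_sub, add_mul, one_mul, map_add, conv_FS, coeff_FS, coeff_X]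
  match n with
  | 0 => simp [schS_zero, coeff_zero_X_mul]
  | 1 =>
    rw [coeff_succ_X_mul, coeff_FS]
    simp [Finset.sum_range_succ, schS_zero, schS_one]
  | (m+2) =>
    rw [coeff_succ_X_mul, coeff_FS, sum_shift]
    have hrec : (schS (m+2) : ℚ) =
        schS (m+1) + 2 * ∑ k ∈ Finset.range m, (schS (k+1) : ℚ) * schS (m+1-k) := by
      rw [schS_rec]; push_cast; ring
    simp only [Nat.add_eq, if_neg (by omega : ¬ (m+2 = 1))]
    rw [hrec]; ring

noncomputable def DFS : PowerSeries ℚ := d⁄dX ℚ FS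

lemma coeff_DFS (n : ℕ) : coeff n DFS = (schS (n+1) : ℚ) * (n+1) := by
  rw [DFS, coeff_derivative, coeff_FS]

lemma DFS_eq : 4*FS*DFS = FS + (1 + X)*DFS - 1 := by
  have h0 : FS*FS + FS*FS = FS + X*FS - X := by linear_combination FS_eq
  have h := congrArg (d⁄dX ℚ) h0
  simp only [map_add, map_sub, Derivation.leibniz, derivative_X, smul_eq_mul, mul_one] at h
  show 4*FS*(d⁄dX ℚ FS) = FS + (1 + X)*(d⁄dX ℚ FS) - 1
  linear_combination h

lemma key_eq : (1 - 6*X + X^2) * DFS = (X - 3)*FS + (1 - X) := by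
  have h1 : 2*(FS*FS) - ((1+X)*FS - X) = 0 := by rw [FS_eq]; ring
  have h2 : 4*FS*DFS - (FS + (1 + X)*DFS - 1) = 0 := by rw [DFS_eq]; ring
  linear_combination (2 - 8*DFS) * h1 + (4*FS - 1 - X) * h2


lemma coeff_key (m : ℕ) :
    (schS (m+3):ℚ)*(m+3) + (schS (m+1):ℚ)*(m+1) + 3*(schS (m+2):ℚ) =
      6*((schS (m+2):ℚ)*(m+2)) + (schS (m+1):ℚ) := by
  have h : DFS + X*(X*DFS) + (FS+FS+FS) + X =
      ((X*DFS)+(X*DFS)+(X*DFS)+(X*DFS)+(X*DFS)+(X*DFS)) + X*FS + 1 := by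
    linear_combination key_eq
  have h2 := congrArg (coeff (R := ℚ) (m+2)) h
  simp only [map_add, coeff_succ_X_mul, coeff_DFS, coeff_FS, coeff_X, coeff_one,
    if_neg (by omega : ¬ (m+2 = 1)), if_neg (by omega : ¬ (m+2 = 0))] at h2
  push_cast at h2 ⊢
  linarith

lemma schS_threeterm (n : ℕ) (hn : 2 ≤ n) :
    3 * (2 * n - 1) * schS n = (n + 1) * schS (n + 1) + (n - 2) * schS (n - 1) := by
  obtain ⟨m, rfl⟩ : ∃ m, n = m + 2 := ⟨n - 2, by omega⟩
  have e1 : 2 * (m+2) - 1 = 2*m+3 := by omega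
  have e2 : m + 2 - 2 = m := by omega
  have e3 : m + 2 - 1 = m + 1 := by omega
  rw [e1, e2, e3]
  have hq : ((3 * (2*m+3) * schS (m+2) : ℕ) : ℚ) =
      (((m+2+1) * schS (m+2+1) + m * schS (m+1) : ℕ) : ℚ) := by
    push_cast
    have := coeff_key m
    have e : (m:ℚ) + 2 + 1 = m + 3 := by ring
    rw [e]
    push_cast at this
    linarith
  exact_mod_cast hq


/-- The number of well-weighted binary trees with `n` leaves is the little Schröder
number `s(n)` determined by `s(1) = s(2) = 1` and the three-term recurrence
`3(2n-1) s(n) = (n+1) s(n+1) + (n-2) s(n-1)` for `n ≥ 2`. -/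
theorem card_wellWeighted_eq_schroeder (s : ℕ → ℕ)
    (h1 : s 1 = 1) (h2 : s 2 = 1)
    (hrec : ∀ n : ℕ, 2 ≤ n →
      3 * (2 * n - 1) * s n = (n + 1) * s (n + 1) + (n - 2) * s (n - 1)) :
    ∀ n : ℕ, 1 ≤ n → wwS n = s n := by
  have hS2 : schS 2 = 1 := by
    rw [schS_rec 0]
    simp [schS_one]
  have hs_eq : ∀ n : ℕ, 1 ≤ n → s n = schS n := by
    intro n
    induction n using Nat.strong_induction_on with
    | _ n ih =>
      match n with
      | 0 => intro h; omega
      | 1 => intro _; rw [h1, schS_one]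
      | 2 => intro _; rw [h2, hS2]
      | (n+3) =>
        intro _
        have ha := hrec (n+2) (by omega)
        have hb := schS_threeterm (n+2) (by omega)
        have e2 : n+2-2 = n := by omega
        have e3 : n+2-1 = n+1 := by omega
        rw [e2, e3] at ha hb
        rw [ih (n+2) (by omega) (by omega), ih (n+1) (by omega) (by omega)] at ha
        have hd := ha.symm.trans hb
        have he := Nat.add_right_cancel hd
        exact Nat.eq_of_mul_eq_mul_left (by omega) he
  intro n hn
  rw [wwS_eq_schS, hs_eq n hn]
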